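/- Let Ω ⊂ ℝ^d be a bounded domain, T > 0, Ω_T = (0,T) × Ω, M an N-function on Ω_T and M* its convex conjugate. Let ξ_n, ξ ∈ L_M(Ω_T) and η_n, η ∈ L_{M*}(Ω_T) be such that ξ_n → ξ modularly in L_M(Ω_T) and η_n → η modularly in L_{M*}(Ω_T). Then the scalar products converge in L¹: ∫_{Ω_T} |ξ_n(t,x)·η_n(t,x) − ξ(t,x)·η(t,x)| dt dx → 0 as n → ∞. -/

import Mathlib

open Filter Set MeasureTheory

/-- A Young function: `m : [0,∞) → [0,∞)` with `m(s) = 0 ↔ s = 0`, convex,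
and superlinear: `m(s)/s → 0` as `s → 0⁺` and `m(s)/s → ∞` as `s → ∞`. -/
def IsYoung (m : ℝ → ℝ) : Prop :=
  (∀ s, 0 ≤ s → 0 ≤ m s) ∧
  (∀ s, 0 ≤ s → (m s = 0 ↔ s = 0)) ∧
  ConvexOn ℝ (Set.Ici 0) m ∧
  Tendsto (fun s => m s / s) (nhdsWithin 0 (Set.Ioi 0)) (nhds 0) ∧
  Tendsto (fun s => m s / s) atTop atTop

/-- The measure on `Ω_T = (0,T) × Ω` (Lebesgue measure restricted to `(0,T) × Ω`). -/
noncomputable def parMeasure {d : ℕ} (Ω : Set (EuclideanSpace ℝ (Fin d))) (T : ℝ) :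
    Measure (ℝ × EuclideanSpace ℝ (Fin d)) :=
  volume.restrict (Set.Ioo 0 T ×ˢ Ω)

/-- An `N`-function on `Ω_T`: even and convex in `ξ`, Carathéodory, and sandwiched between
two Young functions. -/
def IsNFunction {d : ℕ} (μ : Measure (ℝ × EuclideanSpace ℝ (Fin d)))
    (M : ℝ × EuclideanSpace ℝ (Fin d) → EuclideanSpace ℝ (Fin d) → ℝ) : Prop :=
  (∀ᵐ p ∂μ, ∀ ξ, M p ξ = M p (-ξ)) ∧
  (∀ᵐ p ∂μ, Continuous (M p)) ∧
  (∀ ξ, Measurable fun p => M p ξ) ∧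
  (∀ᵐ p ∂μ, ConvexOn ℝ Set.univ (M p)) ∧
  ∃ m₁ m₂, IsYoung m₁ ∧ IsYoung m₂ ∧
    ∀ᵐ p ∂μ, ∀ ξ, m₁ ‖ξ‖ ≤ M p ξ ∧ M p ξ ≤ m₂ ‖ξ‖

/-- The convex conjugate `M*(t,x,η) = sup_{ξ ∈ ℝ^d} (ξ·η − M(t,x,ξ))`. -/
noncomputable def nConj {d : ℕ}
    (M : ℝ × EuclideanSpace ℝ (Fin d) → EuclideanSpace ℝ (Fin d) → ℝ)
    (p : ℝ × EuclideanSpace ℝ (Fin d)) (η : EuclideanSpace ℝ (Fin d)) : ℝ :=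
  sSup (Set.range fun ξ => (@inner ℝ _ _ ξ η) - M p ξ)

open scoped ENNReal

namespace IsYoung
variable {m : ℝ → ℝ} (hm : IsYoung m)

lemma zero (hm : IsYoung m) : m 0 = 0 := (hm.2.1 0 le_rfl).mpr rfl

lemma nonneg (hm : IsYoung m) {s : ℝ} (hs : 0 ≤ s) : 0 ≤ m s := hm.1 s hs

lemma pos (hm : IsYoung m) {s : ℝ} (hs : 0 < s) : 0 < m s :=
  lt_of_le_of_ne (hm.nonneg hs.le) fun h => hs.ne' ((hm.2.1 s hs.le).mp h.symm)

lemma mono (hm : IsYoung m) {a b : ℝ} (ha : 0 ≤ a) (hab : a ≤ b) : m a ≤ m b := by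
  rcases eq_or_lt_of_le (ha.trans hab) with hb | hb
  · have hb0 : b = 0 := hb.symm
    have ha0 : a = 0 := le_antisymm (hab.trans_eq hb0) ha
    simp [ha0, hb0]
  · have key : m ((a/b) • b + (1 - a/b) • (0:ℝ)) ≤ (a/b) • m b + (1 - a/b) • m 0 :=
      hm.2.2.1.2 (mem_Ici.mpr hb.le) (mem_Ici.mpr le_rfl) (div_nonneg ha hb.le)
        (by rw [sub_nonneg]; exact div_le_one_of_le₀ hab hb.le)
        (by ring)
    have harg : (a/b) • b + (1 - a/b) • (0:ℝ) = a := by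
      rw [smul_eq_mul, smul_eq_mul, mul_zero, add_zero, div_mul_cancel₀ a hb.ne']
    rw [harg, hm.zero, smul_eq_mul, smul_eq_mul, mul_zero, add_zero] at key
    calc m a ≤ (a/b) * m b := key
      _ ≤ 1 * m b := by
          apply mul_le_mul_of_nonneg_right _ (hm.nonneg hb.le)
          exact div_le_one_of_le₀ hab hb.le
      _ = m b := one_mul _

lemma exists_linear_le (hm : IsYoung m) (c : ℝ) : ∃ s₀ > (0:ℝ), ∀ s ≥ s₀, c * s ≤ m s := by
  have h := hm.2.2.2.2.eventually_ge_atTop c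
  rw [eventually_atTop] at h
  obtain ⟨s₀, hs₀⟩ := h
  refine ⟨max s₀ 1, lt_of_lt_of_le one_pos (le_max_right _ _), fun s hs => ?_⟩
  have hs1 : (1:ℝ) ≤ s := le_trans (le_max_right _ _) hs
  have hspos : 0 < s := lt_of_lt_of_le one_pos hs1
  have := hs₀ s (le_trans (le_max_left _ _) hs)
  rw [le_div_iff₀ hspos] at this; linarith

lemma exists_small (hm : IsYoung m) {ε : ℝ} (hε : 0 < ε) : ∃ t > (0:ℝ), m t < ε * t := by
  have h := (hm.2.2.2.1.eventually_lt_const hε).and (eventually_mem_nhdsWithin)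
  obtain ⟨t, h1, h2⟩ := h.exists
  have ht : 0 < t := h2
  refine ⟨t, ht, ?_⟩; rw [div_lt_iff₀ ht] at h1; linarith

end IsYoung

section Conj
variable {d : ℕ} {N : EuclideanSpace ℝ (Fin d) → ℝ} {m₁ m₂ : ℝ → ℝ}

-- BddAbove of the conjugate range
lemma bddAbove_conj_range
    (hm₁ : ∀ c : ℝ, ∃ s₀ > (0:ℝ), ∀ s ≥ s₀, c * s ≤ m₁ s)
    (hm₁0 : ∀ s, 0 ≤ s → 0 ≤ m₁ s)
    (hlow : ∀ ξ, m₁ ‖ξ‖ ≤ N ξ) (η : EuclideanSpace ℝ (Fin d)) :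
    BddAbove (range fun ξ : EuclideanSpace ℝ (Fin d) => (inner ℝ ξ η : ℝ) - N ξ) := by
  obtain ⟨s₀, hs₀, h⟩ := hm₁ (‖η‖ + 1)
  refine ⟨s₀ * ‖η‖, ?_⟩
  rintro x ⟨ξ, rfl⟩
  show (inner ℝ ξ η : ℝ) - N ξ ≤ s₀ * ‖η‖
  have hCS : (inner ℝ ξ η : ℝ) ≤ ‖ξ‖ * ‖η‖ := real_inner_le_norm ξ η
  have hlo := hlow ξ
  rcases le_or_gt s₀ ‖ξ‖ with hc | hc
  · have hlin := h ‖ξ‖ hc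
    have h0 : (0:ℝ) ≤ s₀ * ‖η‖ := mul_nonneg hs₀.le (norm_nonneg η)
    nlinarith [norm_nonneg ξ]
  · have h1 : ‖ξ‖ * ‖η‖ ≤ s₀ * ‖η‖ := mul_le_mul_of_nonneg_right hc.le (norm_nonneg η)
    have h2 : 0 ≤ m₁ ‖ξ‖ := hm₁0 _ (norm_nonneg ξ)
    nlinarith

lemma le_conj (η ξ : EuclideanSpace ℝ (Fin d))
    (hbdd : BddAbove (range fun ξ : EuclideanSpace ℝ (Fin d) => (inner ℝ ξ η : ℝ) - N ξ)) :
    (inner ℝ ξ η : ℝ) - N ξ ≤ sSup (range fun ξ : EuclideanSpace ℝ (Fin d) => (inner ℝ ξ η : ℝ) - N ξ) :=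
  le_csSup hbdd (mem_range_self ξ)

lemma conj_nonneg (η : EuclideanSpace ℝ (Fin d)) (hN0 : N 0 = 0)
    (hbdd : BddAbove (range fun ξ : EuclideanSpace ℝ (Fin d) => (inner ℝ ξ η : ℝ) - N ξ)) :
    0 ≤ sSup (range fun ξ : EuclideanSpace ℝ (Fin d) => (inner ℝ ξ η : ℝ) - N ξ) := by
  have := le_conj η 0 hbdd
  simpa [hN0] using this

lemma abs_inner_le_fenchel {η ξ : EuclideanSpace ℝ (Fin d)}
    (heven : ∀ ζ, N ζ = N (-ζ))
    (hbdd : BddAbove (range fun ξ : EuclideanSpace ℝ (Fin d) => (inner ℝ ξ η : ℝ) - N ξ)) :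
    |(inner ℝ ξ η : ℝ)| ≤ N ξ + sSup (range fun ξ : EuclideanSpace ℝ (Fin d) => (inner ℝ ξ η : ℝ) - N ξ) := by
  rw [abs_le]
  constructor
  · have := le_conj η (-ξ) hbdd
    rw [inner_neg_left, ← heven ξ] at this
    linarith
  · have := le_conj η ξ hbdd
    linarith

lemma conj_lower_bound {s t : ℝ} (hs : 0 < s) (ht : 0 < t) (hts : m₂ t < (s/2) * t)
    (hupp : ∀ ξ, N ξ ≤ m₂ ‖ξ‖) {η : EuclideanSpace ℝ (Fin d)} (hη : s ≤ ‖η‖)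
    (hbdd : BddAbove (range fun ξ : EuclideanSpace ℝ (Fin d) => (inner ℝ ξ η : ℝ) - N ξ)) :
    (s/2) * t ≤ sSup (range fun ξ : EuclideanSpace ℝ (Fin d) => (inner ℝ ξ η : ℝ) - N ξ) := by
  have hη0 : 0 < ‖η‖ := lt_of_lt_of_le hs hη
  have h1 := le_conj η ((t / ‖η‖) • η) hbdd
  have h2 : (inner ℝ ((t/‖η‖) • η) η : ℝ) = t * ‖η‖ := by
    rw [real_inner_smul_left, real_inner_self_eq_norm_sq]
    field_simp
  have hnrm : ‖(t/‖η‖) • η‖ = t := by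
    rw [norm_smul, Real.norm_eq_abs, abs_div, abs_of_pos ht, abs_of_pos hη0]
    field_simp
  have h3 : N ((t/‖η‖) • η) ≤ m₂ t := by
    have := hupp ((t/‖η‖) • η)
    rwa [hnrm] at this
  nlinarith [mul_le_mul_of_nonneg_left hη ht.le]

end Conj

section Meas
variable {X : Type*} [MeasurableSpace X] {d : ℕ}
variable {N : X → EuclideanSpace ℝ (Fin d) → ℝ}

lemma measurable_comp_simpleFunc (hmeas : ∀ ξ, Measurable fun p => N p ξ)
    (u : SimpleFunc X (EuclideanSpace ℝ (Fin d))) :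
    Measurable fun p => N p (u p) := by
  classical
  induction u using SimpleFunc.induction with
  | const c hs =>
    rename_i s
    have heq : (fun p => N p ((SimpleFunc.piecewise s hs (SimpleFunc.const X c)
        (SimpleFunc.const X 0)) p)) = s.piecewise (fun p => N p c) (fun p => N p 0) := by
      funext p
      by_cases hp : p ∈ s <;> simp [SimpleFunc.piecewise_apply, Set.piecewise, hp]
    rw [heq]
    exact Measurable.piecewise hs (hmeas c) (hmeas 0)
  | add hfg hf hg =>
    rename_i f g
    have heq : (fun p => N p ((f + g) p))
        = (Function.support f).piecewise (fun p => N p (f p)) (fun p => N p (g p)) := by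
      funext p
      by_cases hp : p ∈ Function.support f
      · have hgp : g p = 0 := by
          by_contra h
          exact (Set.disjoint_left.mp hfg hp) h
        simp [Set.piecewise, hp, hgp]
      · have hfp : f p = 0 := Function.notMem_support.mp hp
        simp [Set.piecewise, hp, hfp]
    rw [heq]
    exact Measurable.piecewise f.measurableSet_support hf hg

lemma aemeasurable_comp (μ : Measure X) (hmeas : ∀ ξ, Measurable fun p => N p ξ)
    (hcont : ∀ᵐ p ∂μ, Continuous (N p)) {v : X → EuclideanSpace ℝ (Fin d)}
    (hv : Measurable v) : AEMeasurable (fun p => N p (v p)) μ := by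
  apply aemeasurable_of_tendsto_metrizable_ae'
    (f := fun k p => N p (SimpleFunc.approxOn v hv univ 0 (mem_univ 0) k p))
  · exact fun k => (measurable_comp_simpleFunc hmeas _).aemeasurable
  · filter_upwards [hcont] with p hp
    have h1 : Tendsto (fun k => SimpleFunc.approxOn v hv univ 0 (mem_univ 0) k p)
        atTop (nhds (v p)) :=
      SimpleFunc.tendsto_approxOn hv (mem_univ 0) (by simp)
    exact (hp.tendsto (v p)).comp h1

lemma aemeasurable_ofReal_conj (μ : Measure X) (hmeas : ∀ ξ, Measurable fun p => N p ξ)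
    (hcont : ∀ᵐ p ∂μ, Continuous (N p))
    (hbdd : ∀ᵐ p ∂μ, ∀ η : EuclideanSpace ℝ (Fin d),
      BddAbove (range fun ξ : EuclideanSpace ℝ (Fin d) => (inner ℝ ξ η : ℝ) - N p ξ))
    {w : X → EuclideanSpace ℝ (Fin d)} (hw : Measurable w) :
    AEMeasurable (fun p => ENNReal.ofReal
      (sSup (range fun ξ : EuclideanSpace ℝ (Fin d) => (inner ℝ ξ (w p) : ℝ) - N p ξ))) μ := by
  obtain ⟨D, hD⟩ := TopologicalSpace.exists_dense_seq (EuclideanSpace ℝ (Fin d))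
  have hMeasRHS : Measurable fun p => ⨆ k : ℕ, ENNReal.ofReal ((inner ℝ (D k) (w p) : ℝ) - N p (D k)) := by
    apply Measurable.iSup
    intro k
    exact ((Measurable.inner measurable_const hw).sub (hmeas (D k))).ennreal_ofReal
  have key : ∀ᵐ p ∂μ, (⨆ k : ℕ, ENNReal.ofReal ((inner ℝ (D k) (w p) : ℝ) - N p (D k)))
      = ENNReal.ofReal (sSup (range fun ξ : EuclideanSpace ℝ (Fin d) => (inner ℝ ξ (w p) : ℝ) - N p ξ)) := by
    filter_upwards [hcont, hbdd] with p hc hb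
    set f : EuclideanSpace ℝ (Fin d) → ℝ := fun ξ => (inner ℝ ξ (w p) : ℝ) - N p ξ with hf
    have hfc : Continuous f := (continuous_id.inner continuous_const).sub hc
    have h1 : ENNReal.ofReal (sSup (range f)) = ⨆ ξ, ENNReal.ofReal (f ξ) := by
      rw [Monotone.map_csSup_of_continuousAt ENNReal.continuous_ofReal.continuousAt
        (fun a b h => ENNReal.ofReal_le_ofReal h) (range_nonempty f) (hb (w p))]
      rw [← Set.range_comp]
      rfl
    have h2 : (⨆ ξ, ENNReal.ofReal (f ξ)) = ⨆ k : ℕ, ENNReal.ofReal (f (D k)) := by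
      apply le_antisymm
      · refine iSup_le fun ξ => ?_
        obtain ⟨g, hg1, hg2⟩ := mem_closure_iff_seq_limit.mp (hD ξ)
        have htend : Tendsto (fun i => ENNReal.ofReal (f (g i))) atTop
            (nhds (ENNReal.ofReal (f ξ))) :=
          (ENNReal.continuous_ofReal.tendsto _).comp ((hfc.tendsto ξ).comp hg2)
        refine le_of_tendsto htend (Eventually.of_forall fun i => ?_)
        obtain ⟨k, hk⟩ := hg1 i
        rw [← hk]
        exact le_iSup (fun k => ENNReal.ofReal (f (D k))) k
      · exact iSup_le fun k => le_iSup (fun ξ => ENNReal.ofReal (f ξ)) (D k)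
    rw [h1, h2]
  exact hMeasRHS.aemeasurable.congr key

end Meas

lemma key_tendsto {X : Type*} [MeasurableSpace X] {μ : Measure X}
    {F G : ℕ → X → ℝ≥0∞} {H : X → ℝ≥0∞}
    (hF : ∀ n, AEMeasurable (F n) μ) (hG : ∀ n, AEMeasurable (G n) μ)
    (hH : AEMeasurable H μ) (hHfin : ∫⁻ p, H p ∂μ ≠ ⊤)
    (hle : ∀ n, ∀ᵐ p ∂μ, F n p ≤ G n p + H p)
    (hG0 : Tendsto (fun n => ∫⁻ p, G n p ∂μ) atTop (nhds 0))
    (hpt : ∀ᵐ p ∂μ, ∀ ε : ℝ≥0∞, 0 < ε → ∃ δ : ℝ≥0∞, 0 < δ ∧ ∀ n, G n p < δ → F n p ≤ ε) :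
    Tendsto (fun n => ∫⁻ p, F n p ∂μ) atTop (nhds 0) := by
  have hbound : ∀ n, ∫⁻ p, F n p ∂μ
      ≤ (∫⁻ p, min (F n p) (H p) ∂μ) + ∫⁻ p, G n p ∂μ := by
    intro n
    calc ∫⁻ p, F n p ∂μ ≤ ∫⁻ p, (min (F n p) (H p) + G n p) ∂μ := by
          apply lintegral_mono_ae
          filter_upwards [hle n] with p h
          rcases le_total (F n p) (H p) with h' | h'
          · rw [min_eq_left h']; exact le_self_add
          · rw [min_eq_right h']
            calc F n p ≤ G n p + H p := h
              _ = H p + G n p := add_comm _ _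
      _ = _ := lintegral_add_left' ((hF n).min hH) _
  have hmin : Tendsto (fun n => ∫⁻ p, min (F n p) (H p) ∂μ) atTop (nhds 0) := by
    apply tendsto_of_subseq_tendsto
    intro ns hns
    have h1 : Tendsto (fun k => ∫⁻ p, G (ns k) p ∂μ) atTop (nhds 0) := hG0.comp hns
    have h2 : ∀ k : ℕ, ∃ m, ∫⁻ p, G (ns m) p ∂μ ≤ (2:ℝ≥0∞)⁻¹ ^ k := by
      intro k
      have hpos : (0:ℝ≥0∞) < 2⁻¹ ^ k := by
        have h2 : (0:ℝ≥0∞) < 2⁻¹ := ENNReal.inv_pos.mpr ENNReal.ofNat_ne_top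
        exact ENNReal.pow_pos h2 k
      exact ((ENNReal.tendsto_nhds_zero.mp h1) _ hpos).exists
    choose ms hms using h2
    refine ⟨ms, ?_⟩
    have hsum : ∑' k, ∫⁻ p, G (ns (ms k)) p ∂μ ≠ ⊤ := by
      refine ne_top_of_le_ne_top ?_ (ENNReal.tsum_le_tsum hms)
      rw [ENNReal.tsum_geometric]
      simp [ENNReal.one_sub_inv_two]
    have htsum_meas : AEMeasurable (fun p => ∑' k, G (ns (ms k)) p) μ :=
      AEMeasurable.ennreal_tsum fun k => hG _
    have hfin : ∫⁻ p, ∑' k, G (ns (ms k)) p ∂μ ≠ ⊤ := by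
      rw [lintegral_tsum fun k => hG _]; exact hsum
    have hae : ∀ᵐ p ∂μ, ∑' k, G (ns (ms k)) p ≠ ⊤ :=
      (ae_lt_top' htsum_meas hfin).mono fun p h => h.ne
    have hlim : ∀ᵐ p ∂μ, Tendsto (fun k => min (F (ns (ms k)) p) (H p)) atTop (nhds 0) := by
      filter_upwards [hae, hpt] with p h1p h2p
      have hg0 : Tendsto (fun k => G (ns (ms k)) p) atTop (nhds 0) :=
        ENNReal.tendsto_atTop_zero_of_tsum_ne_top h1p
      have hf0 : Tendsto (fun k => F (ns (ms k)) p) atTop (nhds 0) := by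
        rw [ENNReal.tendsto_nhds_zero]
        intro ε hε
        obtain ⟨δ, hδ, hδ2⟩ := h2p ε hε
        filter_upwards [hg0.eventually_lt_const hδ] with k hk using hδ2 _ hk
      exact tendsto_of_tendsto_of_tendsto_of_le_of_le tendsto_const_nhds hf0
        (fun k => zero_le) (fun k => min_le_left _ _)
    have hdom := tendsto_lintegral_of_dominated_convergence' H
      (fun k => (hF _).min hH)
      (fun k => Eventually.of_forall fun p => min_le_right _ _) hHfin hlim
    simpa using hdom
  have hsum0 : Tendsto (fun n => (∫⁻ p, min (F n p) (H p) ∂μ) + ∫⁻ p, G n p ∂μ)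
      atTop (nhds 0) := by
    have := Tendsto.add hmin hG0
    simpa using this
  exact tendsto_of_tendsto_of_tendsto_of_le_of_le tendsto_const_nhds hsum0
    (fun n => zero_le) hbound
set_option maxHeartbeats 1000000 in
/-- If `ξ_n → ξ` modularly in `L_M(Ω_T)` and `η_n → η` modularly in `L_{M*}(Ω_T)`,
then `ξ_n·η_n → ξ·η` in `L¹(Ω_T)`. -/
theorem modular_convergence_product_L1 {d : ℕ}
    (Ω : Set (EuclideanSpace ℝ (Fin d))) (T : ℝ) (hT : 0 < T)
    (hΩo : IsOpen Ω) (hΩb : Bornology.IsBounded Ω) (hΩne : Ω.Nonempty)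
    (M : ℝ × EuclideanSpace ℝ (Fin d) → EuclideanSpace ℝ (Fin d) → ℝ)
    (hM : IsNFunction (parMeasure Ω T) M)
    (ξn ηn : ℕ → ℝ × EuclideanSpace ℝ (Fin d) → EuclideanSpace ℝ (Fin d))
    (ξ η : ℝ × EuclideanSpace ℝ (Fin d) → EuclideanSpace ℝ (Fin d))
    (hξnm : ∀ n, Measurable (ξn n)) (hξm : Measurable ξ)
    (hηnm : ∀ n, Measurable (ηn n)) (hηm : Measurable η)
    -- membership in L_M resp. L_{M*}
    (hξnL : ∀ n, ∃ lam > (0 : ℝ),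
      ∫⁻ p, ENNReal.ofReal (M p (lam⁻¹ • ξn n p)) ∂(parMeasure Ω T) < ⊤)
    (hξL : ∃ lam > (0 : ℝ),
      ∫⁻ p, ENNReal.ofReal (M p (lam⁻¹ • ξ p)) ∂(parMeasure Ω T) < ⊤)
    (hηnL : ∀ n, ∃ lam > (0 : ℝ),
      ∫⁻ p, ENNReal.ofReal (nConj M p (lam⁻¹ • ηn n p)) ∂(parMeasure Ω T) < ⊤)
    (hηL : ∃ lam > (0 : ℝ),
      ∫⁻ p, ENNReal.ofReal (nConj M p (lam⁻¹ • η p)) ∂(parMeasure Ω T) < ⊤)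
    -- modular convergences
    (hmodξ : ∃ lam > (0 : ℝ),
      Tendsto (fun n => ∫⁻ p, ENNReal.ofReal (M p (lam⁻¹ • (ξn n p - ξ p))) ∂(parMeasure Ω T))
        atTop (nhds 0))
    (hmodη : ∃ lam > (0 : ℝ),
      Tendsto
        (fun n => ∫⁻ p, ENNReal.ofReal (nConj M p (lam⁻¹ • (ηn n p - η p))) ∂(parMeasure Ω T))
        atTop (nhds 0)) :
    Tendsto
      (fun n => ∫⁻ p,
        ENNReal.ofReal |(@inner ℝ _ _ (ξn n p) (ηn n p)) - (@inner ℝ _ _ (ξ p) (η p))|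
          ∂(parMeasure Ω T))
      atTop (nhds 0) := by
  classical
  obtain ⟨heven, hcont, hmeas, hconv, m₁, m₂, hm₁, hm₂, hsand⟩ := hM
  set μ := parMeasure Ω T with hμdef
  obtain ⟨la, hla, hmξ⟩ := hmodξ
  obtain ⟨lb, hlb, hmη⟩ := hmodη
  obtain ⟨lc, hlc, hCfin⟩ := hξL
  obtain ⟨ld, hld, hDfin⟩ := hηL
  -- scaled functions
  set A : ℕ → ℝ × EuclideanSpace ℝ (Fin d) → EuclideanSpace ℝ (Fin d) :=
    fun n p => la⁻¹ • (ξn n p - ξ p) with hAdef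
  set B : ℕ → ℝ × EuclideanSpace ℝ (Fin d) → EuclideanSpace ℝ (Fin d) :=
    fun n p => lb⁻¹ • (ηn n p - η p) with hBdef
  set C : ℝ × EuclideanSpace ℝ (Fin d) → EuclideanSpace ℝ (Fin d) :=
    fun p => lc⁻¹ • ξ p with hCdef
  set D : ℝ × EuclideanSpace ℝ (Fin d) → EuclideanSpace ℝ (Fin d) :=
    fun p => ld⁻¹ • η p with hDdef
  have hAm : ∀ n, Measurable (A n) := fun n => ((hξnm n).sub hξm).const_smul la⁻¹
  have hBm : ∀ n, Measurable (B n) := fun n => ((hηnm n).sub hηm).const_smul lb⁻¹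
  have hCm : Measurable C := hξm.const_smul lc⁻¹
  have hDm : Measurable D := hηm.const_smul ld⁻¹
  -- a.e. facts
  have hbddA : ∀ᵐ p ∂μ, ∀ η' : EuclideanSpace ℝ (Fin d),
      BddAbove (range fun ξ' : EuclideanSpace ℝ (Fin d) => (inner ℝ ξ' η' : ℝ) - M p ξ') := by
    filter_upwards [hsand] with p h η'
    exact bddAbove_conj_range hm₁.exists_linear_le hm₁.1 (fun ξ' => (h ξ').1) η'
  have hM0 : ∀ᵐ p ∂μ, M p 0 = 0 := by
    filter_upwards [hsand] with p h
    have h1 := (h 0).1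
    have h2 := (h 0).2
    rw [norm_zero, hm₁.zero] at h1
    rw [norm_zero, hm₂.zero] at h2
    linarith
  -- constants
  set κ : ℝ := la * lb + la * ld + lc * lb with hκdef
  have hκ : 0 < κ := by positivity
  set K : ℝ≥0∞ := ENNReal.ofReal κ with hKdef
  have hK0 : K ≠ 0 := (ENNReal.ofReal_pos.mpr hκ).ne'
  have hKtop : K ≠ ⊤ := ENNReal.ofReal_ne_top
  -- pointwise algebraic identity
  have hXid : ∀ n p, (inner ℝ (ξn n p) (ηn n p) : ℝ) - (inner ℝ (ξ p) (η p) : ℝ)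
      = la * lb * (inner ℝ (A n p) (B n p) : ℝ) + la * ld * (inner ℝ (A n p) (D p) : ℝ)
        + lc * lb * (inner ℝ (C p) (B n p) : ℝ) := by
    intro n p
    show (inner ℝ (ξn n p) (ηn n p) : ℝ) - (inner ℝ (ξ p) (η p) : ℝ)
      = la * lb * (inner ℝ (la⁻¹ • (ξn n p - ξ p)) (lb⁻¹ • (ηn n p - η p)) : ℝ)
        + la * ld * (inner ℝ (la⁻¹ • (ξn n p - ξ p)) (ld⁻¹ • η p) : ℝ)
        + lc * lb * (inner ℝ (lc⁻¹ • ξ p) (lb⁻¹ • (ηn n p - η p)) : ℝ)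
    simp only [real_inner_smul_left, real_inner_smul_right, inner_sub_left, inner_sub_right]
    field_simp
    ring
  -- the three ENNReal functions
  set Fn : ℕ → ℝ × EuclideanSpace ℝ (Fin d) → ℝ≥0∞ := fun n p =>
    ENNReal.ofReal |(inner ℝ (ξn n p) (ηn n p) : ℝ) - (inner ℝ (ξ p) (η p) : ℝ)| with hFndef
  set Gn : ℕ → ℝ × EuclideanSpace ℝ (Fin d) → ℝ≥0∞ := fun n p =>
    K * (ENNReal.ofReal (M p (A n p)) + ENNReal.ofReal (nConj M p (B n p))) with hGndef
  set Hf : ℝ × EuclideanSpace ℝ (Fin d) → ℝ≥0∞ := fun p =>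
    K * (ENNReal.ofReal (M p (C p)) + ENNReal.ofReal (nConj M p (D p))) with hHfdef
  have hFmeas : ∀ n, AEMeasurable (Fn n) μ := fun n =>
    ((((hξnm n).inner (hηnm n)).sub (hξm.inner hηm)).abs.ennreal_ofReal).aemeasurable
  have hGmeas : ∀ n, AEMeasurable (Gn n) μ := by
    intro n
    apply AEMeasurable.const_mul
    apply AEMeasurable.fun_add
    · exact (aemeasurable_comp μ hmeas hcont (hAm n)).ennreal_ofReal
    · exact aemeasurable_ofReal_conj μ hmeas hcont hbddA (hBm n)
  have hHmeas : AEMeasurable Hf μ := by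
    apply AEMeasurable.const_mul
    apply AEMeasurable.fun_add
    · exact (aemeasurable_comp μ hmeas hcont hCm).ennreal_ofReal
    · exact aemeasurable_ofReal_conj μ hmeas hcont hbddA hDm
  have hHfin : ∫⁻ p, Hf p ∂μ ≠ ⊤ := by
    have e1 : ∫⁻ p, Hf p ∂μ = K * ((∫⁻ p, ENNReal.ofReal (M p (C p)) ∂μ)
        + ∫⁻ p, ENNReal.ofReal (nConj M p (D p)) ∂μ) := by
      rw [hHfdef]
      rw [lintegral_const_mul' K _ hKtop,
        lintegral_add_left' ((aemeasurable_comp μ hmeas hcont hCm).ennreal_ofReal)]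
    rw [e1]
    exact ENNReal.mul_ne_top hKtop (ENNReal.add_ne_top.mpr ⟨hCfin.ne, hDfin.ne⟩)
  have hG0 : Tendsto (fun n => ∫⁻ p, Gn n p ∂μ) atTop (nhds 0) := by
    have e1 : (fun n => ∫⁻ p, Gn n p ∂μ) = fun n =>
        K * ((∫⁻ p, ENNReal.ofReal (M p (A n p)) ∂μ)
          + ∫⁻ p, ENNReal.ofReal (nConj M p (B n p)) ∂μ) := by
      funext n
      rw [hGndef]
      rw [lintegral_const_mul' K _ hKtop,
        lintegral_add_left' ((aemeasurable_comp μ hmeas hcont (hAm n)).ennreal_ofReal)]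
    rw [e1]
    have h2 : Tendsto (fun n => (∫⁻ p, ENNReal.ofReal (M p (A n p)) ∂μ)
        + ∫⁻ p, ENNReal.ofReal (nConj M p (B n p)) ∂μ) atTop (nhds 0) := by
      have := Tendsto.add hmξ hmη
      simpa using this
    have := ENNReal.Tendsto.const_mul h2 (Or.inr hKtop)
    simpa using this
  -- Fenchel-Young domination
  have hle : ∀ n, ∀ᵐ p ∂μ, Fn n p ≤ Gn n p + Hf p := by
    intro n
    filter_upwards [heven, hsand, hbddA, hM0] with p hev hsd hbd hz
    have h1 := abs_inner_le_fenchel (N := M p) (ξ := A n p) (η := B n p)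
      (fun ζ => hev ζ) (hbd (B n p))
    have h2 := abs_inner_le_fenchel (N := M p) (ξ := A n p) (η := D p)
      (fun ζ => hev ζ) (hbd (D p))
    have h3 := abs_inner_le_fenchel (N := M p) (ξ := C p) (η := B n p)
      (fun ζ => hev ζ) (hbd (B n p))
    have hu : 0 ≤ M p (A n p) := le_trans (hm₁.nonneg (norm_nonneg _)) (hsd _).1
    have hw : 0 ≤ M p (C p) := le_trans (hm₁.nonneg (norm_nonneg _)) (hsd _).1
    have hv : 0 ≤ nConj M p (B n p) := conj_nonneg (B n p) hz (hbd _)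
    have hzz : 0 ≤ nConj M p (D p) := conj_nonneg (D p) hz (hbd _)
    set u := M p (A n p)
    set v : ℝ := nConj M p (B n p)
    set w := M p (C p)
    set z : ℝ := nConj M p (D p)
    have h1' : |(inner ℝ (A n p) (B n p) : ℝ)| ≤ u + v := h1
    have h2' : |(inner ℝ (A n p) (D p) : ℝ)| ≤ u + z := h2
    have h3' : |(inner ℝ (C p) (B n p) : ℝ)| ≤ w + v := h3
    have habs : |(inner ℝ (ξn n p) (ηn n p) : ℝ) - (inner ℝ (ξ p) (η p) : ℝ)|
        ≤ la * lb * |(inner ℝ (A n p) (B n p) : ℝ)| + la * ld * |(inner ℝ (A n p) (D p) : ℝ)|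
          + lc * lb * |(inner ℝ (C p) (B n p) : ℝ)| := by
      rw [hXid n p]
      calc |la * lb * (inner ℝ (A n p) (B n p) : ℝ) + la * ld * (inner ℝ (A n p) (D p) : ℝ)
            + lc * lb * (inner ℝ (C p) (B n p) : ℝ)|
          ≤ |la * lb * (inner ℝ (A n p) (B n p) : ℝ) + la * ld * (inner ℝ (A n p) (D p) : ℝ)|
            + |lc * lb * (inner ℝ (C p) (B n p) : ℝ)| := abs_add_le _ _
        _ ≤ |la * lb * (inner ℝ (A n p) (B n p) : ℝ)| + |la * ld * (inner ℝ (A n p) (D p) : ℝ)|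
            + |lc * lb * (inner ℝ (C p) (B n p) : ℝ)| := by
              exact add_le_add_left (abs_add_le _ _) _
        _ = la * lb * |(inner ℝ (A n p) (B n p) : ℝ)| + la * ld * |(inner ℝ (A n p) (D p) : ℝ)|
            + lc * lb * |(inner ℝ (C p) (B n p) : ℝ)| := by
              simp only [abs_mul, abs_of_pos hla, abs_of_pos hlb, abs_of_pos hlc,
                abs_of_pos hld]
    have hreal : |(inner ℝ (ξn n p) (ηn n p) : ℝ) - (inner ℝ (ξ p) (η p) : ℝ)|
        ≤ κ * (u + v) + κ * (w + z) := by
      have c1 : la * lb * |(inner ℝ (A n p) (B n p) : ℝ)| ≤ la * lb * (u + v) :=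
        mul_le_mul_of_nonneg_left h1' (mul_pos hla hlb).le
      have c2 : la * ld * |(inner ℝ (A n p) (D p) : ℝ)| ≤ la * ld * (u + z) :=
        mul_le_mul_of_nonneg_left h2' (mul_pos hla hld).le
      have c3 : lc * lb * |(inner ℝ (C p) (B n p) : ℝ)| ≤ lc * lb * (w + v) :=
        mul_le_mul_of_nonneg_left h3' (mul_pos hlc hlb).le
      have d1 : 0 ≤ lc * lb * u := mul_nonneg (mul_pos hlc hlb).le hu
      have d2 : 0 ≤ la * ld * v := mul_nonneg (mul_pos hla hld).le hv
      have d3 : 0 ≤ (la * lb + la * ld) * w := by positivity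
      have d4 : 0 ≤ (la * lb + lc * lb) * z := by positivity
      rw [hκdef]
      nlinarith [habs]
    calc Fn n p = ENNReal.ofReal
          |(inner ℝ (ξn n p) (ηn n p) : ℝ) - (inner ℝ (ξ p) (η p) : ℝ)| := rfl
      _ ≤ ENNReal.ofReal (κ * (u + v) + κ * (w + z)) := ENNReal.ofReal_le_ofReal hreal
      _ ≤ ENNReal.ofReal (κ * (u + v)) + ENNReal.ofReal (κ * (w + z)) := ENNReal.ofReal_add_le
      _ = K * ENNReal.ofReal (u + v) + K * ENNReal.ofReal (w + z) := by
          rw [ENNReal.ofReal_mul hκ.le, ENNReal.ofReal_mul hκ.le]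
      _ ≤ K * (ENNReal.ofReal u + ENNReal.ofReal v)
          + K * (ENNReal.ofReal w + ENNReal.ofReal z) := by
          exact add_le_add (mul_le_mul_right ENNReal.ofReal_add_le _)
            (mul_le_mul_right ENNReal.ofReal_add_le _)
      _ = Gn n p + Hf p := rfl
  -- pointwise smallness criterion
  have hpt : ∀ᵐ p ∂μ, ∀ ε : ℝ≥0∞, 0 < ε → ∃ δ : ℝ≥0∞, 0 < δ ∧
      ∀ n, Gn n p < δ → Fn n p ≤ ε := by
    filter_upwards [hsand, hbddA] with p hsd hbd
    intro ε hε
    obtain ⟨r, hr, hrε⟩ : ∃ r : ℝ, 0 < r ∧ ENNReal.ofReal r ≤ ε := by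
      rcases eq_or_ne ε ⊤ with hh | hh
      · exact ⟨1, one_pos, by simp [hh]⟩
      · exact ⟨ε.toReal, ENNReal.toReal_pos hε.ne' hh, by rw [ENNReal.ofReal_toReal hh]⟩
    set κ' : ℝ := la * lb + la * ld * ‖D p‖ + lc * lb * ‖C p‖ + 1 with hκ'def
    have hκ' : 0 < κ' := by positivity
    set s : ℝ := min 1 (r / κ') with hsdef
    have hs : 0 < s := lt_min one_pos (by positivity)
    have hs1 : s ≤ 1 := min_le_left _ _
    obtain ⟨t, ht, hts⟩ := hm₂.exists_small (half_pos hs)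
    have hts' : m₂ t < (s / 2) * t := by
      have : s / 2 * t = s / 2 * t := rfl
      calc m₂ t < s / 2 * t := by linarith [hts]
        _ = (s / 2) * t := rfl
    set δ' : ℝ := min (m₁ s) ((s / 2) * t) with hδ'def
    have hδ' : 0 < δ' := lt_min (hm₁.pos hs) (by positivity)
    refine ⟨K * ENNReal.ofReal δ', ?_, ?_⟩
    · exact ENNReal.mul_pos hK0 (ENNReal.ofReal_pos.mpr hδ').ne'
    intro n hn
    have hn' : K * (ENNReal.ofReal (M p (A n p)) + ENNReal.ofReal (nConj M p (B n p)))
        < K * ENNReal.ofReal δ' := hn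
    have hxy : ENNReal.ofReal (M p (A n p)) + ENNReal.ofReal (nConj M p (B n p))
        < ENNReal.ofReal δ' := (ENNReal.mul_lt_mul_iff_right hK0 hKtop).mp hn'
    have hx : M p (A n p) < δ' := by
      have hxx : ENNReal.ofReal (M p (A n p)) < ENNReal.ofReal δ' :=
        lt_of_le_of_lt le_self_add hxy
      by_contra hcon
      push_neg at hcon
      exact absurd (ENNReal.ofReal_le_ofReal hcon) (not_le.mpr hxx)
    have hy : nConj M p (B n p) < δ' := by
      have hyy : ENNReal.ofReal (nConj M p (B n p)) < ENNReal.ofReal δ' :=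
        lt_of_le_of_lt le_add_self hxy
      by_contra hcon
      push_neg at hcon
      exact absurd (ENNReal.ofReal_le_ofReal hcon) (not_le.mpr hyy)
    have hAn : ‖A n p‖ < s := by
      by_contra hcon
      push_neg at hcon
      have e1 : m₁ s ≤ m₁ ‖A n p‖ := hm₁.mono hs.le hcon
      have e2 := (hsd (A n p)).1
      have e3 : δ' ≤ m₁ s := min_le_left _ _
      linarith
    have hBn : ‖B n p‖ < s := by
      by_contra hcon
      push_neg at hcon
      have e1 : (s / 2) * t ≤ nConj M p (B n p) :=
        conj_lower_bound hs ht hts' (fun ξ' => (hsd ξ').2) hcon (hbd (B n p))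
      have e3 : δ' ≤ (s / 2) * t := min_le_right _ _
      linarith
    refine le_trans (ENNReal.ofReal_le_ofReal ?_) hrε
    rw [hXid n p]
    have t1 : |(inner ℝ (A n p) (B n p) : ℝ)| ≤ ‖A n p‖ * ‖B n p‖ := abs_real_inner_le_norm _ _
    have t2 : |(inner ℝ (A n p) (D p) : ℝ)| ≤ ‖A n p‖ * ‖D p‖ := abs_real_inner_le_norm _ _
    have t3 : |(inner ℝ (C p) (B n p) : ℝ)| ≤ ‖C p‖ * ‖B n p‖ := abs_real_inner_le_norm _ _
    have e1 : ‖A n p‖ * ‖B n p‖ ≤ s := by nlinarith [norm_nonneg (A n p), norm_nonneg (B n p)]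
    have e2 : ‖A n p‖ * ‖D p‖ ≤ s * ‖D p‖ :=
      mul_le_mul_of_nonneg_right hAn.le (norm_nonneg _)
    have e3 : ‖C p‖ * ‖B n p‖ ≤ ‖C p‖ * s :=
      mul_le_mul_of_nonneg_left hBn.le (norm_nonneg _)
    have hsκ' : s * κ' ≤ r := by
      have := min_le_right 1 (r / κ')
      calc s * κ' ≤ (r / κ') * κ' := mul_le_mul_of_nonneg_right this hκ'.le
        _ = r := by field_simp
    have habs2 : |la * lb * (inner ℝ (A n p) (B n p) : ℝ) + la * ld * (inner ℝ (A n p) (D p) : ℝ)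
        + lc * lb * (inner ℝ (C p) (B n p) : ℝ)|
        ≤ la * lb * |(inner ℝ (A n p) (B n p) : ℝ)| + la * ld * |(inner ℝ (A n p) (D p) : ℝ)|
          + lc * lb * |(inner ℝ (C p) (B n p) : ℝ)| := by
      calc |la * lb * (inner ℝ (A n p) (B n p) : ℝ) + la * ld * (inner ℝ (A n p) (D p) : ℝ)
            + lc * lb * (inner ℝ (C p) (B n p) : ℝ)|
          ≤ |la * lb * (inner ℝ (A n p) (B n p) : ℝ) + la * ld * (inner ℝ (A n p) (D p) : ℝ)|
            + |lc * lb * (inner ℝ (C p) (B n p) : ℝ)| := abs_add_le _ _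
        _ ≤ |la * lb * (inner ℝ (A n p) (B n p) : ℝ)| + |la * ld * (inner ℝ (A n p) (D p) : ℝ)|
            + |lc * lb * (inner ℝ (C p) (B n p) : ℝ)| := add_le_add_left (abs_add_le _ _) _
        _ = _ := by
            simp only [abs_mul, abs_of_pos hla, abs_of_pos hlb, abs_of_pos hlc,
              abs_of_pos hld]
    have f1 : la * lb * |(inner ℝ (A n p) (B n p) : ℝ)| ≤ la * lb * s :=
      mul_le_mul_of_nonneg_left (t1.trans e1) (mul_pos hla hlb).le
    have f2 : la * ld * |(inner ℝ (A n p) (D p) : ℝ)| ≤ la * ld * (s * ‖D p‖) :=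
      mul_le_mul_of_nonneg_left (t2.trans e2) (mul_pos hla hld).le
    have f3 : lc * lb * |(inner ℝ (C p) (B n p) : ℝ)| ≤ lc * lb * (‖C p‖ * s) :=
      mul_le_mul_of_nonneg_left (t3.trans e3) (mul_pos hlc hlb).le
    have hexp : la * lb * s + la * ld * (s * ‖D p‖) + lc * lb * (‖C p‖ * s) + s = s * κ' := by
      rw [hκ'def]; ring
    nlinarith [habs2, hs.le]
  exact key_tendsto hFmeas hGmeas hHmeas hHfin hle hG0 hpt
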